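/- arXiv:0709.1563 — 2 statements merged into one kernel-verified Lean document; each statement's English description precedes it below -/
import Mathlib

section
/- Let A be a p×L complex matrix and Q a p×p positive semidefinite Hermitian matrix. If Z and Z̃ are L×L positive semidefinite Hermitian matrices each satisfying Q = A·Z·Aᴴ = A·Z̃·Aᴴ, and each has at most σ(A)/2 nonzero rows (where σ(A) is the Kruskal rank of A), then Z = Z̃. -/
open Matrix Set
open scoped ComplexOrder

/-- The Kruskal rank of a matrix `A`: the maximal number `q` such that every
set of `q` columns of `A` is linearly independent. -/
noncomputable def kruskalRank {p L : ℕ} (A : Matrix (Fin p) (Fin L) ℂ) : ℕ :=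
  sSup {q | q ≤ L ∧ ∀ S : Finset (Fin L), S.card = q →
    LinearIndependent ℂ (fun j : S => A.transpose (j : Fin L))}

lemma kruskalRank_mem {p L : ℕ} (A : Matrix (Fin p) (Fin L) ℂ) :
    kruskalRank A ∈ {q | q ≤ L ∧ ∀ S : Finset (Fin L), S.card = q →
      LinearIndependent ℂ (fun j : S => A.transpose (j : Fin L))} := by
  apply Nat.sSup_mem
  · refine ⟨0, Nat.zero_le _, fun S hS => ?_⟩
    have : S = ∅ := Finset.card_eq_zero.mp hS
    subst this
    have : IsEmpty ((∅ : Finset (Fin L)) : Type) := by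
      simp [Finset.isEmpty_coe_sort]
      exact ⟨fun x => x.2⟩
    exact linearIndependent_empty_type
  · exact ⟨L, fun q hq => hq.1⟩

lemma kruskal_li {p L : ℕ} (A : Matrix (Fin p) (Fin L) ℂ)
    (T : Finset (Fin L)) (hT : T.card ≤ kruskalRank A) :
    LinearIndependent ℂ (fun j : T => A.transpose (j : Fin L)) := by
  obtain ⟨hL, hprop⟩ := kruskalRank_mem A
  obtain ⟨T', hTT', hT'⟩ := Finset.exists_superset_card_eq hT (by simpa using hL)
  have hLI := hprop T' hT'
  have := hLI.comp (fun x : T => (⟨(x : Fin L), hTT' x.2⟩ : T'))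
    (fun a b hab => by
      apply Subtype.ext
      simpa using congrArg Subtype.val hab)
  exact this

lemma key_vanish {p L : ℕ} (A : Matrix (Fin p) (Fin L) ℂ)
    (S : Finset (Fin L)) (hS : S.card ≤ kruskalRank A)
    (w : Fin L → ℂ) (hsupp : ∀ k, k ∉ S → w k = 0)
    (h : ∀ i, ∑ k, A i k * w k = 0) : w = 0 := by
  have hLI := kruskal_li A S hS
  set Bt : Matrix S (Fin p) ℂ := A.transpose.submatrix (fun k : S => (k : Fin L)) id with hBt
  have hrows : LinearIndependent ℂ (fun k : S => Bt k) := hLI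
  have hinj : Function.Injective Bt.vecMul := Matrix.vecMul_injective_iff.mpr hrows
  have hz : Bt.vecMul (fun k : S => w k) = 0 := by
    funext i
    have hsum : ∑ k ∈ S, A i k * w k = ∑ k, A i k * w k :=
      Finset.sum_subset (Finset.subset_univ S) (fun k _ hk => by simp [hsupp k hk])
    have heq : ((fun k : S => w k) ᵥ* Bt) i = ∑ k ∈ S, A i k * w k := by
      rw [Matrix.vecMul, dotProduct, ← Finset.sum_attach S (fun k => A i k * w k)]
      simp [Bt, mul_comm]
    simp [heq, hsum, h i]
  have : (fun k : S => w k) = 0 := by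
    apply hinj
    simpa using hz
  funext k
  by_cases hk : k ∈ S
  · exact congrFun this ⟨k, hk⟩
  · exact hsupp k hk

theorem stmt4 {p L : ℕ} (A : Matrix (Fin p) (Fin L) ℂ)
    (Q : Matrix (Fin p) (Fin p) ℂ) (Z Zt : Matrix (Fin L) (Fin L) ℂ)
    (hQ : Q.PosSemidef) (hZ : Z.PosSemidef) (hZt : Zt.PosSemidef)
    (hEqZ : Q = A * Z * Aᴴ) (hEqZt : Q = A * Zt * Aᴴ)
    (hZs : 2 * {k | Z k ≠ 0}.ncard ≤ kruskalRank A)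
    (hZts : 2 * {k | Zt k ≠ 0}.ncard ≤ kruskalRank A) :
    Z = Zt := by
  classical
  set D := Z - Zt with hD
  have hADA : A * D * Aᴴ = 0 := by
    rw [hD, Matrix.mul_sub, Matrix.sub_mul, ← hEqZ, ← hEqZt, sub_self]
  have hDH : Dᴴ = D := by
    rw [hD, Matrix.conjTranspose_sub, hZ.isHermitian, hZt.isHermitian]
  -- support set
  set S : Finset (Fin L) := ({k | Z k ≠ 0} ∪ {k | Zt k ≠ 0}).toFinset with hSdef
  have hrow : ∀ k, k ∉ S → D k = 0 := by
    intro k hk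
    simp only [hSdef, Set.mem_toFinset, Set.mem_union, Set.mem_setOf_eq, not_or, not_not] at hk
    funext j
    simp [hD, Matrix.sub_apply, congrFun hk.1 j, congrFun hk.2 j]
  have hScard : S.card ≤ kruskalRank A := by
    have h1 : S.card ≤ {k | Z k ≠ 0}.ncard + {k | Zt k ≠ 0}.ncard := by
      have : S.card = ({k | Z k ≠ 0} ∪ {k | Zt k ≠ 0}).ncard := by
        rw [hSdef, Set.ncard_eq_toFinset_card']
      rw [this]
      exact Set.ncard_union_le _ _
    omega
  -- Step 1: D * Aᴴ = 0
  have hstep1 : D * Aᴴ = 0 := by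
    ext k i'
    have hw := key_vanish A S hScard (fun k => (D * Aᴴ) k i')
      (fun k hk => by simp [Matrix.mul_apply, hrow k hk])
      (fun i => by
        have := congrFun (congrFun hADA i) i'
        rw [Matrix.mul_assoc] at this
        simpa [Matrix.mul_apply] using this)
    simpa using congrFun hw k
  -- Step 2: A * D = 0
  have hstep2 : A * D = 0 := by
    have := congrArg Matrix.conjTranspose hstep1
    simpa [Matrix.conjTranspose_mul, hDH] using this
  -- Conclude D = 0
  have hD0 : D = 0 := by
    ext k j
    have hw := key_vanish A S hScard (fun k => D k j)
      (fun k hk => by simp [hrow k hk])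
      (fun i => by
        have := congrFun (congrFun hstep2 i) j
        simpa [Matrix.mul_apply] using this)
    simpa using congrFun hw k
  have := sub_eq_zero.mp (hD ▸ hD0)
  exact this
end

section
/- Let A be a p×L complex matrix with Kruskal rank σ(A). Suppose U₀ is an L×r complex matrix with at most σ(A)/2 nonzero rows, and V = A·U₀. Then among all L×r matrices U satisfying V = A·U, the matrix U₀ has the minimal number of nonzero rows, and it is the unique matrix achieving this minimum. Moreover, any solution U with at most σ(A)/2 nonzero rows equals U₀. -/
open Matrix Set

lemma kr_mem {p L : ℕ} (A : Matrix (Fin p) (Fin L) ℂ) :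
    kruskalRank A ≤ L ∧ ∀ S : Finset (Fin L), S.card = kruskalRank A →
      LinearIndependent ℂ (fun j : S => A.transpose (j : Fin L)) := by
  have : kruskalRank A ∈ {q | q ≤ L ∧ ∀ S : Finset (Fin L), S.card = q →
      LinearIndependent ℂ (fun j : S => A.transpose (j : Fin L))} := by
    apply Nat.sSup_mem
    · refine ⟨0, Nat.zero_le L, fun S hS => ?_⟩
      have : S = ∅ := Finset.card_eq_zero.mp hS
      subst this
      exact linearIndependent_empty_type
    · exact ⟨L, fun q hq => hq.1⟩
  exact this

lemma key_zero {p L r : ℕ} (A : Matrix (Fin p) (Fin L) ℂ)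
    (W : Matrix (Fin L) (Fin r) ℂ) (hAW : A * W = 0)
    (hcard : {k | W k ≠ 0}.ncard ≤ kruskalRank A) : W = 0 := by
  classical
  obtain ⟨hL, hall⟩ := kr_mem A
  set D : Set (Fin L) := {k | W k ≠ 0} with hD
  have hfin : D.Finite := Set.toFinite D
  set S : Finset (Fin L) := hfin.toFinset with hSdef
  have hScard : S.card = D.ncard := by
    rw [hSdef, Set.ncard_eq_toFinset_card D hfin]
  have hSle : S.card ≤ kruskalRank A := by rw [hScard]; exact hcard
  obtain ⟨T, hsub, hT⟩ := Finset.exists_superset_card_eq hSle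
    (by simpa using hL)
  have hTLI := hall T hT
  have hWoff : ∀ x : Fin L, x ∉ S → W x = 0 := by
    intro x hx
    by_contra hne
    exact hx (by simp [hSdef, hD, hne])
  funext j c
  have hzero : ∀ j' : T, W (j' : Fin L) c = 0 := by
    apply Fintype.linearIndependent_iff.mp hTLI (fun j' : T => W (j' : Fin L) c)
    funext i
    simp only [Finset.sum_apply, Pi.smul_apply, transpose_apply, smul_eq_mul,
      Pi.zero_apply]
    have hsum : ∑ j' ∈ T, W j' c * A i j' = ∑ j' : Fin L, W j' c * A i j' := by
      apply Finset.sum_subset (Finset.subset_univ T)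
      intro x _ hx
      have : W x = 0 := hWoff x (fun hxS => hx (hsub hxS))
      simp [this]
    have hAWi : ∑ j' : Fin L, A i j' * W j' c = 0 := by
      have := congrFun (congrFun hAW i) c
      simpa [Matrix.mul_apply] using this
    calc ∑ j' : T, W (j' : Fin L) c * A i (j' : Fin L)
        = ∑ j' ∈ T, W j' c * A i j' := (Finset.sum_coe_sort T (fun x => W x c * A i x))
      _ = ∑ j' : Fin L, W j' c * A i j' := hsum
      _ = 0 := by rw [← hAWi]; exact Finset.sum_congr rfl (fun x _ => mul_comm _ _)
  by_cases hj : j ∈ T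
  · exact hzero ⟨j, hj⟩
  · have : W j = 0 := hWoff j (fun hjS => hj (hsub hjS))
    simp [this]

theorem stmt9 {p L r : ℕ} (A : Matrix (Fin p) (Fin L) ℂ)
    (U0 : Matrix (Fin L) (Fin r) ℂ)
    (hU0 : 2 * {k | U0 k ≠ 0}.ncard ≤ kruskalRank A)
    (V : Matrix (Fin p) (Fin r) ℂ) (hV : V = A * U0) :
    (∀ U : Matrix (Fin L) (Fin r) ℂ, V = A * U → U ≠ U0 →
      {k | U0 k ≠ 0}.ncard < {k | U k ≠ 0}.ncard) ∧
    (∀ U : Matrix (Fin L) (Fin r) ℂ, V = A * U →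
      2 * {k | U k ≠ 0}.ncard ≤ kruskalRank A → U = U0) := by
  have part2 : ∀ U : Matrix (Fin L) (Fin r) ℂ, V = A * U →
      2 * {k | U k ≠ 0}.ncard ≤ kruskalRank A → U = U0 := by
    intro U hVU hcard
    have hAW : A * (U - U0) = 0 := by
      rw [Matrix.mul_sub, ← hVU, ← hV, sub_self]
    have hsub : {k | (U - U0) k ≠ 0} ⊆ {k | U k ≠ 0} ∪ {k | U0 k ≠ 0} := by
      intro k hk
      by_contra hc
      simp only [Set.mem_union, Set.mem_setOf_eq] at hc
      push_neg at hc
      refine hk ?_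
      funext c
      simp [Matrix.sub_apply, hc.1, hc.2]
    have hcard' : {k | (U - U0) k ≠ 0}.ncard ≤ kruskalRank A := by
      calc {k | (U - U0) k ≠ 0}.ncard
          ≤ ({k | U k ≠ 0} ∪ {k | U0 k ≠ 0}).ncard :=
            Set.ncard_le_ncard hsub (Set.toFinite _)
        _ ≤ {k | U k ≠ 0}.ncard + {k | U0 k ≠ 0}.ncard := Set.ncard_union_le _ _
        _ ≤ kruskalRank A := by omega
    have := key_zero A (U - U0) hAW hcard'
    exact sub_eq_zero.mp this
  refine ⟨?_, part2⟩
  intro U hVU hne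
  by_contra hlt
  push_neg at hlt
  exact hne (part2 U hVU (by omega))
end
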